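/- arXiv:2309.09711 — 6 statements merged into one kernel-verified Lean document; each statement's English description precedes it below -/
import Mathlib

section
/- Let μ be a real random variable supported on [0,∞) with CDF F, and define its Cauchy transform G(z) = ∫ 1/(z−x) dF(x) for Re(z) < 0. Then for a > 0, ∫_0^∞ log(1 + a·x/(1+x)) dF(x) = log(1+a) + ∫_0^a (1/(y+1)^2) · G(−1/(y+1)) dy. -/
open MeasureTheory

noncomputable def phi (y x : ℝ) : ℝ := max x 0 / (1 + (y + 1) * max x 0)

lemma phi_meas : Measurable (Function.uncurry phi) := by
  apply Measurable.div
  · exact measurable_snd.max measurable_const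
  · exact measurable_const.add
      ((measurable_fst.add measurable_const).mul (measurable_snd.max measurable_const))

lemma phi_bound {y : ℝ} (hy : 0 ≤ y) (x : ℝ) : ‖phi y x‖ ≤ 1 := by
  have hm : 0 ≤ max x 0 := le_max_right x 0
  have hd : (0:ℝ) < 1 + (y + 1) * max x 0 := by nlinarith
  unfold phi
  rw [Real.norm_eq_abs, abs_of_nonneg (div_nonneg hm hd.le), div_le_one hd]
  nlinarith

lemma phi_int_eq {a : ℝ} (ha : 0 < a) {x : ℝ} (hx : 0 ≤ x) :
    ∫ y in (0:ℝ)..a, phi y x = Real.log (1 + a * x / (1 + x)) := by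
  have h1x : (0:ℝ) < 1 + x := by linarith
  have hderiv : ∀ t ∈ Set.uIcc (0:ℝ) a,
      HasDerivAt (fun t => Real.log (1 + x + t * x)) (phi t x) t := by
    intro t ht
    rw [Set.uIcc_of_le ha.le] at ht
    have hd : (0:ℝ) < 1 + x + t * x := by nlinarith [ht.1]
    have h1 : HasDerivAt (fun t : ℝ => 1 + x + t * x) x t :=
      (hasDerivAt_mul_const x).const_add (1 + x)
    have h2 := (Real.hasDerivAt_log hd.ne').comp t h1
    refine h2.congr_deriv ?_
    symm
    unfold phi
    rw [max_eq_left hx, show (1:ℝ) + (t + 1) * x = 1 + x + t * x by ring, div_eq_inv_mul]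
  have hint : IntervalIntegrable (fun t => phi t x) volume 0 a := by
    apply ContinuousOn.intervalIntegrable
    unfold phi
    refine ContinuousOn.div continuousOn_const (by fun_prop) fun t ht => ?_
    rw [Set.uIcc_of_le ha.le] at ht
    have hm : 0 ≤ max x 0 := le_max_right x 0
    have h0 : (0:ℝ) < 1 + (t + 1) * max x 0 := by nlinarith [ht.1]
    exact h0.ne'
  rw [intervalIntegral.integral_eq_sub_of_hasDerivAt hderiv hint]
  have hnum : (0:ℝ) < 1 + x + a * x := by nlinarith
  have : 1 + a * x / (1 + x) = (1 + x + a * x) / (1 + x) := by field_simp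
  rw [this, Real.log_div hnum.ne' h1x.ne']
  simp

lemma rhs_eq (μ : Measure ℝ) [IsProbabilityMeasure μ] (hsupp : ∀ᵐ x ∂μ, 0 ≤ x)
    (G : ℝ → ℝ) (hG : ∀ z < (0:ℝ), G z = ∫ x, (z - x)⁻¹ ∂μ)
    {y : ℝ} (hy : 0 ≤ y) :
    (1 / (y + 1) ^ 2) * G (-(1 / (y + 1))) = (∫ x, phi y x ∂μ) - 1 / (y + 1) := by
  have hy1 : (0:ℝ) < y + 1 := by linarith
  have hz : -(1 / (y + 1)) < 0 := neg_lt_zero.mpr (by positivity)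
  have hint : Integrable (fun x => phi y x) μ := by
    refine (integrable_const (1:ℝ)).mono' ?_ (Filter.Eventually.of_forall (phi_bound hy))
    exact (phi_meas.comp measurable_prodMk_left).aestronglyMeasurable
  have hsub : ∫ x, (phi y x - 1 / (y + 1)) ∂μ = (∫ x, phi y x ∂μ) - 1 / (y + 1) := by
    rw [integral_sub hint (integrable_const _)]
    simp
  rw [hG _ hz, ← integral_const_mul, ← hsub]
  apply integral_congr_ae
  filter_upwards [hsupp] with x hx
  have hd : (0:ℝ) < 1 + (y + 1) * x := by nlinarith
  have hne : -(1 / (y + 1)) - x ≠ 0 := by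
    have : -(1 / (y + 1)) - x < 0 := by
      have := one_div_pos.mpr hy1; linarith
    exact this.ne
  show (1 / (y + 1) ^ 2) * (-(1 / (y + 1)) - x)⁻¹ = phi y x - 1 / (y + 1)
  unfold phi
  rw [max_eq_left hx]
  have e : (-(1 / (y + 1)) - x) = -((1 + (y + 1) * x) / (y + 1)) := by
    field_simp
    ring
  rw [e, inv_neg, inv_div, mul_neg]
  field_simp [hd.ne', hy1.ne']
  ring

/-- For a random variable supported on `[0,∞)` with law `μ` and Cauchy
transform `G(z) = ∫ (z−x)⁻¹ dμ(x)` (for `z < 0`), and any `a > 0`,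
`∫ log(1 + a·x/(1+x)) dμ(x) = log(1+a) + ∫_0^a (y+1)⁻² G(−1/(y+1)) dy`. -/
theorem stmt4 (μ : Measure ℝ) [IsProbabilityMeasure μ]
    (hsupp : ∀ᵐ x ∂μ, 0 ≤ x)
    (G : ℝ → ℝ) (hG : ∀ z < (0 : ℝ), G z = ∫ x, (z - x)⁻¹ ∂μ)
    (a : ℝ) (ha : 0 < a) :
    ∫ x, Real.log (1 + a * x / (1 + x)) ∂μ
      = Real.log (1 + a)
        + ∫ y in (0 : ℝ)..a, (1 / (y + 1) ^ 2) * G (-(1 / (y + 1))) := by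
  set ν := volume.restrict (Set.Ioc (0:ℝ) a) with hν
  have hprod : ν.prod μ = (volume.prod μ).restrict (Set.Ioc (0:ℝ) a ×ˢ Set.univ) :=
    Measure.restrict_prod_eq_prod_univ _
  have hbound : ∀ᵐ p ∂(ν.prod μ), ‖Function.uncurry phi p‖ ≤ 1 := by
    rw [hprod]
    filter_upwards [ae_restrict_mem (measurableSet_Ioc.prod MeasurableSet.univ)] with p hp
    exact phi_bound hp.1.1.le p.2
  have hInt : Integrable (Function.uncurry phi) (ν.prod μ) :=
    (integrable_const 1).mono' phi_meas.aestronglyMeasurable hbound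
  have hF : Integrable (fun y => ∫ x, phi y x ∂μ) ν := by
    simpa [Function.uncurry] using hInt.integral_prod_left
  have hswap : ∫ y, ∫ x, phi y x ∂μ ∂ν = ∫ x, ∫ y, phi y x ∂ν ∂μ :=
    integral_integral_swap hInt
  have hFint : IntervalIntegrable (fun y => ∫ x, phi y x ∂μ) volume 0 a := by
    rw [intervalIntegrable_iff_integrableOn_Ioc_of_le ha.le]
    exact hF
  have hgint : IntervalIntegrable (fun y : ℝ => 1 / (y + 1)) volume 0 a := by
    apply ContinuousOn.intervalIntegrable
    apply ContinuousOn.div continuousOn_const (continuousOn_id.add continuousOn_const)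
    intro t ht
    rw [Set.uIcc_of_le ha.le] at ht
    have : (0:ℝ) < t + 1 := by linarith [ht.1]
    exact this.ne'
  have hlog : ∫ y in (0:ℝ)..a, 1 / (y + 1) = Real.log (1 + a) := by
    have h1 : ∫ y in (0:ℝ)..a, 1 / (y + 1)
        = ∫ y in (0+1:ℝ)..(a+1), 1 / y :=
      intervalIntegral.integral_comp_add_right (fun y => 1 / y) 1
    have hne : (0:ℝ) ∉ Set.uIcc (0+1:ℝ) (a+1) := by
      rw [Set.uIcc_of_le (by linarith : (0:ℝ)+1 ≤ a+1)]
      intro h; linarith [h.1]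
    rw [h1, integral_one_div hne]
    norm_num [add_comm]
  have hRHS : ∫ y in (0:ℝ)..a, (1 / (y + 1) ^ 2) * G (-(1 / (y + 1)))
      = (∫ y in (0:ℝ)..a, ∫ x, phi y x ∂μ) - Real.log (1 + a) := by
    rw [show (∫ y in (0:ℝ)..a, (1 / (y + 1) ^ 2) * G (-(1 / (y + 1))))
        = ∫ y in (0:ℝ)..a, ((∫ x, phi y x ∂μ) - 1 / (y + 1)) from
      intervalIntegral.integral_congr (fun t ht => by
        rw [Set.uIcc_of_le ha.le] at ht
        exact rhs_eq μ hsupp G hG ht.1)]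
    rw [intervalIntegral.integral_sub hFint hgint, hlog]
  have hLHS : ∫ x, Real.log (1 + a * x / (1 + x)) ∂μ
      = ∫ y in (0:ℝ)..a, ∫ x, phi y x ∂μ := by
    have h1 : ∫ x, Real.log (1 + a * x / (1 + x)) ∂μ = ∫ x, ∫ y, phi y x ∂ν ∂μ := by
      apply integral_congr_ae
      filter_upwards [hsupp] with x hx
      rw [← phi_int_eq ha hx, intervalIntegral.integral_of_le ha.le]
    rw [h1, ← hswap, intervalIntegral.integral_of_le ha.le]
  rw [hLHS, hRHS]
  ring
end

section
/- For positive integers M1 ≤ M2, N with M1+M2 > N and M2 ≥ N or M2 < N, set Q = N·M1 + N·M2 + M1·M2 − N^2 and S = M1+M2−N. The function G(z) = [M1 − N + 2M1 z + M2 z − N z + sqrt((M1−N)^2 − 2Qz + (M2−N)^2 z^2)] / (2 M1 z (z+1)) (for z ≠ 0, −1) satisfies the system: e11 = M1/(z − e12), e12 = −N/(e22 + e11), e22 = −M2/(1 + e12), with G(z) = e11/M1, i.e., G is the solution of the corresponding ternary quadratic equation system. -/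
set_option maxHeartbeats 1000000


/-- With `Q = N M1 + N M2 + M1 M2 − N²`, the function
`G(z) = [M1−N+2M1 z+M2 z−N z+√((M1−N)²−2Qz+(M2−N)² z²)]/(2 M1 z (z+1))`
satisfies the fixed-point system `e11 = M1/(z−e12)`, `e12 = −N/(e22+e11)`,
`e22 = −M2/(1+e12)` with `e11 = M1 G(z)` (equations written in product form,
which asserts the denominators are nonzero). -/
theorem stmt7 {M1 M2 N : ℕ} (h1 : 0 < M1) (hle : M1 ≤ M2) (h3 : N < M1 + M2)
    (Q : ℝ) (hQ : Q = N * M1 + N * M2 + M1 * M2 - (N : ℝ) ^ 2)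
    (G : ℝ → ℝ)
    (hGdef : ∀ z : ℝ, z ≠ 0 → z ≠ -1 →
      G z = ((M1 : ℝ) - N + 2 * M1 * z + M2 * z - N * z
          + Real.sqrt (((M1 : ℝ) - N) ^ 2 - 2 * Q * z + ((M2 : ℝ) - N) ^ 2 * z ^ 2))
        / (2 * M1 * z * (z + 1)))
    (z : ℝ) (hz : z < 0) (hz1 : z ≠ -1) :
    ∃ e11 e12 e22 : ℝ,
      e11 = M1 * G z ∧
      e11 * (z - e12) = M1 ∧
      e12 * (e22 + e11) = -(N : ℝ) ∧
      e22 * (1 + e12) = -(M2 : ℝ) := by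
  have hzz : z ≠ 0 := ne_of_lt hz
  have hz1' : z + 1 ≠ 0 := fun h => hz1 (by linarith)
  have hG := hGdef z hzz hz1
  set a : ℝ := (M1 : ℝ) with ha_def
  set b : ℝ := (M2 : ℝ) with hb_def
  set n : ℝ := (N : ℝ) with hn_def
  have ha : (0:ℝ) < a := by rw [ha_def]; exact_mod_cast h1
  have hb : (0:ℝ) < b := by rw [hb_def]; exact_mod_cast h1.trans_le hle
  have hn : (0:ℝ) ≤ n := by rw [hn_def]; exact Nat.cast_nonneg N
  have hS : n < a + b := by rw [ha_def, hb_def, hn_def]; exact_mod_cast h3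
  have hΔnn : (0:ℝ) ≤ (a - n) ^ 2 - 2 * Q * z + (b - n) ^ 2 * z ^ 2 := by
    have hQpos : 0 < Q := by rw [hQ]; nlinarith
    nlinarith [sq_nonneg (a - n), sq_nonneg ((b - n) * z)]
  set s : ℝ := Real.sqrt ((a - n) ^ 2 - 2 * Q * z + (b - n) ^ 2 * z ^ 2) with hs_def
  have hs0 : (0:ℝ) ≤ s := Real.sqrt_nonneg _
  have hs2 : s ^ 2 = (a - n) ^ 2
      - 2 * (n * a + n * b + a * b - n ^ 2) * z + (b - n) ^ 2 * z ^ 2 := by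
    rw [hs_def, Real.sq_sqrt hΔnn, hQ]
  -- positivity of W = a - n + (b - n) z + s
  have habz : (0:ℝ) < a * b * (-z) := mul_pos (mul_pos ha hb) (by linarith)
  have hW : 0 < a - n + (b - n) * z + s := by
    nlinarith [hs2, habz, hs0, sq_nonneg (s + (a - n + (b - n) * z))]
  have hWne : a - n + (b - n) * z + s ≠ 0 := hW.ne'
  -- N0 = a - n + (2a + b - n) z + s is nonzero
  have hN0 : a - n + (2 * a + b - n) * z + s ≠ 0 := by
    rcases lt_or_gt_of_ne hz1' with hc | hc
    · intro h0
      have hs' : s = -(a - n + (2 * a + b - n) * z) := by linarith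
      have hs'' : s ^ 2 = (a - n + (2 * a + b - n) * z) ^ 2 := by rw [hs']; ring
      have hX : 0 < a * (a + b - n) * (z * (1 + z)) :=
        mul_pos (mul_pos ha (by linarith)) (mul_pos_of_neg_of_neg hz (by linarith))
      nlinarith [hs2, hs'', hX]
    · have hX : 0 < a * (a + b - n) * (-(z * (1 + z))) := by
        have : z * (1 + z) < 0 := mul_neg_of_neg_of_pos hz (by linarith)
        have := mul_pos ha (show (0:ℝ) < a + b - n by linarith)
        nlinarith
      have : 0 < a - n + (2 * a + b - n) * z + s := by
        nlinarith [hs2, hX, hs0, sq_nonneg (s + (a - n + (2 * a + b - n) * z))]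
      exact this.ne'
  have hz1'' : (1:ℝ) + z ≠ 0 := fun h => hz1' (by linarith)
  have htwo : 2 * z * (z + 1) ≠ 0 := by
    exact mul_ne_zero (mul_ne_zero two_ne_zero hzz) hz1'
  -- the key quadratic identity for the third equation
  have key : ((b - n) * z - a - n + s) * (a - n - (b + n) * z + s)
      = -2 * n * (1 + z) * (a - n + (b - n) * z + s) := by
    linear_combination hs2
  refine ⟨(a - n + (2 * a + b - n) * z + s) / (2 * z * (z + 1)),
      z * ((b - n) * z - a - n + s) / (a - n + (2 * a + b - n) * z + s),
      -b * (a - n + (2 * a + b - n) * z + s)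
        / ((1 + z) * (a - n + (b - n) * z + s)), ?_, ?_, ?_, ?_⟩
  · rw [hG]
    field_simp
    ring
  · rw [div_mul_eq_mul_div, div_eq_iff htwo, mul_sub, mul_div_assoc', mul_div_cancel_left₀ _ hN0]
    ring
  · rw [div_mul_eq_mul_div, div_add_div _ _ (mul_ne_zero hz1'' hWne) htwo,
      mul_div_assoc', div_div,
      div_eq_iff (mul_ne_zero (mul_ne_zero (mul_ne_zero hz1'' hWne) htwo) hN0)]
    linear_combination
      (z * (z + 1) * (a - n + (2 * a + b - n) * z + s)) * key
  · rw [div_mul_eq_mul_div, div_eq_iff (mul_ne_zero hz1'' hWne), mul_assoc, mul_add, mul_one, mul_div_assoc', mul_div_cancel_left₀ _ hN0]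
    ring
end

section
/- Under Rayleigh fading with antenna numbers M1 ≤ M2, M1+M2 > N, the asymptotic Cauchy transform of L at z = −1 equals G_L(−1) = −(M1+M2−N)/(M1+M2). -/
open Filter

/-- Under Rayleigh fading with `M1 ≤ M2`, `M1+M2 > N`, the limiting
Cauchy transform `G_L(z) = [M1−N+2M1 z+M2 z−N z+√Δ(z)]/(2M1 z(z+1))`, with
`Δ(z) = (M1−N)² − 2Qz + (M2−N)² z²` and `Q = N M1+N M2+M1 M2−N²`, extends
continuously to `z = −1` with value `G_L(−1) = −(M1+M2−N)/(M1+M2)`. -/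
theorem stmt8 {M1 M2 N : ℕ} (h1 : 0 < M1) (hle : M1 ≤ M2) (h3 : N < M1 + M2)
    (Q : ℝ) (hQ : Q = N * M1 + N * M2 + M1 * M2 - (N : ℝ) ^ 2) :
    Tendsto (fun z : ℝ =>
        ((M1 : ℝ) - N + 2 * M1 * z + M2 * z - N * z
          + Real.sqrt (((M1 : ℝ) - N) ^ 2 - 2 * Q * z + ((M2 : ℝ) - N) ^ 2 * z ^ 2))
        / (2 * M1 * z * (z + 1)))
      (nhdsWithin (-1) ({-1, 0} : Set ℝ)ᶜ)
      (nhds (-(((M1 : ℝ) + M2 - N) / ((M1 : ℝ) + M2)))) := by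
  subst hQ
  have hm1 : (0:ℝ) < M1 := by exact_mod_cast h1
  have h3' : (N:ℝ) < M1 + M2 := by exact_mod_cast h3
  set D : ℝ → ℝ := fun z =>
    ((M1 : ℝ) - N) ^ 2 - 2 * ((N:ℝ) * M1 + (N:ℝ) * M2 + (M1:ℝ) * M2 - (N : ℝ) ^ 2) * z
      + ((M2 : ℝ) - N) ^ 2 * z ^ 2 with hD
  set A : ℝ → ℝ := fun z => (M1 : ℝ) - N + 2 * M1 * z + M2 * z - N * z with hA
  have hDcont : Continuous D := by fun_prop
  have hDm1 : D (-1) = ((M1:ℝ) + M2) ^ 2 := by simp only [hD]; ring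
  have hAm1 : A (-1) = -((M1:ℝ) + M2) := by simp only [hA]; ring
  set h : ℝ → ℝ := fun z => Real.sqrt (D z) - A z with hh
  have hcont : Continuous h := by
    apply Continuous.sub
    · exact Real.continuous_sqrt.comp hDcont
    · simp only [hA]; fun_prop
  have hhm1 : h (-1) = 2 * ((M1:ℝ) + M2) := by
    simp only [hh, hDm1, hAm1, Real.sqrt_sq (by positivity : (0:ℝ) ≤ (M1:ℝ) + M2)]
    ring
  have hhpos : 0 < h (-1) := by rw [hhm1]; positivity
  have hDpos : 0 < D (-1) := by rw [hDm1]; positivity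
  set g : ℝ → ℝ := fun z => -2 * ((M1:ℝ) + M2 - N) / h z with hg
  have hgval : g (-1) = -(((M1 : ℝ) + M2 - N) / ((M1 : ℝ) + M2)) := by
    have hne : ((M1:ℝ) + M2) ≠ 0 := by positivity
    simp only [hg, hhm1]
    field_simp
  have hgtend : Tendsto g (nhds (-1)) (nhds (-(((M1 : ℝ) + M2 - N) / ((M1 : ℝ) + M2)))) := by
    rw [← hgval]
    exact (ContinuousAt.div continuousAt_const hcont.continuousAt hhpos.ne')
  refine Tendsto.congr' ?_ (hgtend.mono_left nhdsWithin_le_nhds)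
  have hU : ∀ᶠ z in nhds (-1 : ℝ), 0 < h z ∧ 0 < D z := by
    filter_upwards [(isOpen_lt continuous_const hcont).mem_nhds hhpos,
      (isOpen_lt continuous_const hDcont).mem_nhds hDpos] with z h1 h2
    exact ⟨h1, h2⟩
  filter_upwards [eventually_nhdsWithin_of_eventually_nhds hU, self_mem_nhdsWithin]
    with z hz hzmem
  obtain ⟨hhz, hDz⟩ := hz
  simp only [Set.mem_compl_iff, Set.mem_insert_iff, Set.mem_singleton_iff, not_or] at hzmem
  obtain ⟨hz1, hz0⟩ := hzmem
  have hz1' : z + 1 ≠ 0 := fun hc => hz1 (by linarith)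
  have hden : (2 : ℝ) * M1 * z * (z + 1) ≠ 0 := by
    apply mul_ne_zero (mul_ne_zero (mul_ne_zero two_ne_zero hm1.ne') hz0) hz1'
  have hs2 : Real.sqrt (D z) ^ 2 = D z := Real.sq_sqrt hDz.le
  have hhne : Real.sqrt (D z) - A z ≠ 0 := hhz.ne'
  symm
  show ((M1 : ℝ) - N + 2 * M1 * z + M2 * z - N * z + Real.sqrt (D z))
        / (2 * M1 * z * (z + 1)) = -2 * ((M1:ℝ) + M2 - N) / h z
  simp only [hh]
  rw [div_eq_div_iff hden hhne]
  simp only [hD] at hs2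
  linear_combination hs2
end

section
/- Let X1 = [[0, H1],[H1^H, 0]] ∈ C^{n×n} and X2 the n×n matrix with H2 embedded in its lower-right M2×N block (zeros elsewhere). Then X1 − X2^H X2 = [[0, H1],[H1^H, −H2^H H2]], and this matrix equals −(X2^H, 0, I_n) · M^{-1} · (X2; 0; I_n)^T, where M is the 3n×3n block matrix [[I_n, 0, 0],[0, X1, −I_n],[0, −I_n, 0]]. -/
open Matrix

/-- With `X1 = [[0, H1],[H1ᴴ, 0]]` (size `n = M1+N`) and `X2` the
`n×n` matrix with `H2` in its lower-right `M2×N` block (zeros elsewhere, row split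
`(n−M2, M2)`), one has `X1 − X2ᴴ X2 = [[0, H1],[H1ᴴ, −H2ᴴ H2]]`, and this matrix
equals `−(X2ᴴ, 0, I) M⁻¹ (X2; 0; I)` where `M = [[I,0,0],[0,X1,−I],[0,−I,0]]`. -/
theorem stmt13 {M1 M2 N K : ℕ} (hK : K + M2 = M1 + N)
    (H1 : Matrix (Fin M1) (Fin N) ℂ) (H2 : Matrix (Fin M2) (Fin N) ℂ)
    (X1 : Matrix (Fin M1 ⊕ Fin N) (Fin M1 ⊕ Fin N) ℂ)
    (hX1 : X1 = Matrix.fromBlocks 0 H1 H1ᴴ 0)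
    (X2 : Matrix (Fin K ⊕ Fin M2) (Fin M1 ⊕ Fin N) ℂ)
    (hX2 : X2 = Matrix.fromBlocks 0 0 0 H2)
    (M : Matrix ((Fin K ⊕ Fin M2) ⊕ ((Fin M1 ⊕ Fin N) ⊕ (Fin M1 ⊕ Fin N)))
        ((Fin K ⊕ Fin M2) ⊕ ((Fin M1 ⊕ Fin N) ⊕ (Fin M1 ⊕ Fin N))) ℂ)
    (hM : M = Matrix.fromBlocks 1 0 0 (Matrix.fromBlocks X1 (-1) (-1) 0))
    (R : Matrix (Fin M1 ⊕ Fin N)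
        ((Fin K ⊕ Fin M2) ⊕ ((Fin M1 ⊕ Fin N) ⊕ (Fin M1 ⊕ Fin N))) ℂ)
    (hR : R = Matrix.fromCols X2ᴴ (Matrix.fromCols 0 1))
    (C : Matrix ((Fin K ⊕ Fin M2) ⊕ ((Fin M1 ⊕ Fin N) ⊕ (Fin M1 ⊕ Fin N)))
        (Fin M1 ⊕ Fin N) ℂ)
    (hC : C = Matrix.fromRows X2 (Matrix.fromRows 0 1)) :
    X1 - X2ᴴ * X2 = Matrix.fromBlocks 0 H1 H1ᴴ (-(H2ᴴ * H2)) ∧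
    X1 - X2ᴴ * X2 = -(R * M⁻¹ * C) := by
  have h1 : X1 - X2ᴴ * X2 = Matrix.fromBlocks 0 H1 H1ᴴ (-(H2ᴴ * H2)) := by
    subst hX1 hX2
    simp [Matrix.fromBlocks_conjTranspose, Matrix.fromBlocks_multiply,
      sub_eq_add_neg, Matrix.fromBlocks_neg, Matrix.fromBlocks_add]
  refine ⟨h1, ?_⟩
  have hMinv : M⁻¹ = Matrix.fromBlocks 1 0 0 (Matrix.fromBlocks 0 (-1) (-1) (-X1)) := by
    apply Matrix.inv_eq_right_inv
    subst hM
    simp [Matrix.fromBlocks_multiply, Matrix.fromBlocks_one]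
  rw [hMinv, hR, hC]
  simp [Matrix.fromCols_mul_fromBlocks, Matrix.fromCols_mul_fromRows]
  abel
end

section
/- Let G(z) = [M1 − N + (2M1+M2−N) z + √Δ(z)]/(2 M1 z (z+1)) with Δ(z) = (M1−N)^2 − 2Qz + (M2−N)^2 z^2, Q = N M1+N M2+M1 M2−N^2. Then an antiderivative of G on an interval of negative reals avoiding −1 and where Δ > 0 is given by I(a,b) = ((M1−N)/(2M1)) log(b/a) + (1/(2M1))(I1+I2+I3), where I1 = −|M1−N| log( (a/b) · [(M1−N)^2 − Qb + |M1−N|√Δ(b)]/[(M1−N)^2 − Qa + |M1−N|√Δ(a)] ), I2 = −|M2−N| log( [Q−(M2−N)^2 b + |M2−N|√Δ(b)]/[Q−(M2−N)^2 a + |M2−N|√Δ(a)] ), I3 = (M1+M2) log( [Q1 − Q2 b + (M1+M2)√Δ(b)]/[Q1 − Q2 a + (M1+M2)√Δ(a)] ), with Q1 = M1^2+M1M2+NM2−NM1, Q2 = M2^2+M1M2+NM1−NM2. I.e., d/db I(a,b) = G(b). -/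
set_option maxHeartbeats 2000000


/-- The closed-form expression `I(a,·)` (sum of logarithmic terms
`I1, I2, I3`) is an antiderivative of the Rayleigh-fading Cauchy transform
`G(z) = [M1−N+(2M1+M2−N)z+√Δ(z)]/(2M1 z(z+1))` on negative reals avoiding `−1`
where `Δ > 0` and all logarithm arguments are positive: `d/db I(a,b) = G(b)`. -/
theorem stmt16 {M1 M2 N : ℕ} (hM1 : 0 < M1) (hle : M1 ≤ M2) (h3 : N < M1 + M2)
    (Q Q1 Q2 : ℝ)
    (hQ : Q = N * M1 + N * M2 + M1 * M2 - (N : ℝ) ^ 2)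
    (hQ1 : Q1 = (M1 : ℝ) ^ 2 + M1 * M2 + N * M2 - N * M1)
    (hQ2 : Q2 = (M2 : ℝ) ^ 2 + M1 * M2 + N * M1 - N * M2)
    (Δ num1 num2 num3 G : ℝ → ℝ)
    (hΔ : ∀ t, Δ t = ((M1 : ℝ) - N) ^ 2 - 2 * Q * t + ((M2 : ℝ) - N) ^ 2 * t ^ 2)
    (hnum1 : ∀ t, num1 t = ((M1 : ℝ) - N) ^ 2 - Q * t + |(M1 : ℝ) - N| * Real.sqrt (Δ t))
    (hnum2 : ∀ t, num2 t = Q - ((M2 : ℝ) - N) ^ 2 * t + |(M2 : ℝ) - N| * Real.sqrt (Δ t))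
    (hnum3 : ∀ t, num3 t = Q1 - Q2 * t + ((M1 : ℝ) + M2) * Real.sqrt (Δ t))
    (hG : ∀ t, G t = ((M1 : ℝ) - N + (2 * M1 + M2 - N : ℝ) * t + Real.sqrt (Δ t))
        / (2 * M1 * t * (t + 1)))
    (a : ℝ) (ha : a < 0) (ha1 : a ≠ -1) (hΔa : 0 < Δ a)
    (hn1a : 0 < num1 a) (hn2a : 0 < num2 a) (hn3a : 0 < num3 a)
    (Ifun : ℝ → ℝ)
    (hIfun : ∀ t, Ifun t =
      (((M1 : ℝ) - N) / (2 * M1)) * Real.log (t / a)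
      + (1 / (2 * M1)) *
        ( (-|(M1 : ℝ) - N|) * Real.log ((a / t) * (num1 t / num1 a))
        + (-|(M2 : ℝ) - N|) * Real.log (num2 t / num2 a)
        + ((M1 : ℝ) + M2) * Real.log (num3 t / num3 a) ))
    (b : ℝ) (hb : b < 0) (hb1 : b ≠ -1) (hΔb : 0 < Δ b)
    (hn1b : 0 < num1 b) (hn2b : 0 < num2 b) (hn3b : 0 < num3 b) :
    HasDerivAt Ifun (G b) b := by
  have hb0 : b ≠ 0 := ne_of_lt hb
  have ha0 : a ≠ 0 := ne_of_lt ha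
  set c1 : ℝ := |(M1 : ℝ) - N| with hc1
  set c2 : ℝ := |(M2 : ℝ) - N| with hc2
  set s : ℝ := Real.sqrt (Δ b) with hs
  have hspos : 0 < s := Real.sqrt_pos.mpr hΔb
  have hs2 : s ^ 2 = Δ b := Real.sq_sqrt hΔb.le
  -- derivative of Δ
  have hΔd : HasDerivAt Δ (-(2 * Q) + ((M2 : ℝ) - N) ^ 2 * (2 * b)) b := by
    rw [show Δ = (fun t => ((M1 : ℝ) - N) ^ 2 - 2 * Q * t + ((M2 : ℝ) - N) ^ 2 * t ^ 2)
      from funext hΔ]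
    have h := (((hasDerivAt_const b (((M1 : ℝ) - N) ^ 2)).sub
        ((hasDerivAt_id b).const_mul (2 * Q))).add
        ((hasDerivAt_pow 2 b).const_mul (((M2 : ℝ) - N) ^ 2)))
    exact h.congr_deriv (by ring)
  set Dp : ℝ := -(2 * Q) + ((M2 : ℝ) - N) ^ 2 * (2 * b) with hDp
  have hsd : HasDerivAt (fun t => Real.sqrt (Δ t)) (Dp / (2 * s)) b := hΔd.sqrt hΔb.ne'
  have hn1d : HasDerivAt num1 (-Q + c1 * (Dp / (2 * s))) b := by
    rw [show num1 = (fun t => ((M1 : ℝ) - N) ^ 2 - Q * t + c1 * Real.sqrt (Δ t))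
      from funext hnum1]
    have h := (((hasDerivAt_const b (((M1 : ℝ) - N) ^ 2)).sub
        ((hasDerivAt_id b).const_mul Q)).add (hsd.const_mul c1))
    exact h.congr_deriv (by ring)
  have hn2d : HasDerivAt num2 (-(((M2 : ℝ) - N) ^ 2) + c2 * (Dp / (2 * s))) b := by
    rw [show num2 = (fun t => Q - ((M2 : ℝ) - N) ^ 2 * t + c2 * Real.sqrt (Δ t))
      from funext hnum2]
    have h := (((hasDerivAt_const b Q).sub
        ((hasDerivAt_id b).const_mul (((M2 : ℝ) - N) ^ 2))).add (hsd.const_mul c2))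
    exact h.congr_deriv (by ring)
  have hn3d : HasDerivAt num3 (-Q2 + ((M1 : ℝ) + M2) * (Dp / (2 * s))) b := by
    rw [show num3 = (fun t => Q1 - Q2 * t + ((M1 : ℝ) + M2) * Real.sqrt (Δ t))
      from funext hnum3]
    have h := (((hasDerivAt_const b Q1).sub
        ((hasDerivAt_id b).const_mul Q2)).add (hsd.const_mul ((M1 : ℝ) + M2)))
    exact h.congr_deriv (by ring)
  -- log pieces
  have h0l : HasDerivAt (fun t : ℝ => Real.log (t / a)) (1 / b) b := by
    have h := ((hasDerivAt_id b).div_const a).log (div_ne_zero hb0 ha0)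
    exact h.congr_deriv (by simp only [id]; field_simp)
  have hg1 : HasDerivAt (fun t : ℝ => a / t * (num1 t / num1 a))
      ((-a / b ^ 2) * (num1 b / num1 a) + (a / b) * ((-Q + c1 * (Dp / (2 * s))) / num1 a)) b := by
    have hu : HasDerivAt (fun t : ℝ => a / t) (-a / b ^ 2) b := by
      have h := (hasDerivAt_inv hb0).const_mul a
      simp only [div_eq_mul_inv]
      exact h.congr_deriv (by ring)
    exact hu.mul (hn1d.div_const (num1 a))
  have hg1pos : 0 < a / b * (num1 b / num1 a) :=
    mul_pos (div_pos_of_neg_of_neg ha hb) (div_pos hn1b hn1a)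
  have hg1l := hg1.log (ne_of_gt hg1pos)
  have hg2l := (hn2d.div_const (num2 a)).log (ne_of_gt (div_pos hn2b hn2a))
  have hg3l := (hn3d.div_const (num3 a)).log (ne_of_gt (div_pos hn3b hn3a))
  have hI := (h0l.const_mul (((M1 : ℝ) - N) / (2 * M1))).add
    ((((hg1l.const_mul (-c1)).add (hg2l.const_mul (-c2))).add
      (hg3l.const_mul ((M1 : ℝ) + M2))).const_mul ((1 : ℝ) / (2 * M1)))
  rw [show Ifun = _ from funext hIfun]
  have hsne : s ≠ 0 := ne_of_gt hspos
  have hM1R : (0:ℝ) < (M1:ℝ) := by exact_mod_cast hM1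
  have hbp1 : b + 1 ≠ 0 := by intro h; exact hb1 (by linarith)
  have hs2' : s ^ 2 = ((M1:ℝ) - N) ^ 2 - 2 * ((N:ℝ) * M1 + N * M2 + M1 * M2 - (N:ℝ) ^ 2) * b + ((M2:ℝ) - N) ^ 2 * b ^ 2 := by
    rw [hs2, hΔ b, hQ]
  have hN1 := hn1b
  rw [hnum1 b, ← hs] at hN1
  have hN2 := hn2b
  rw [hnum2 b, ← hs] at hN2
  have hN3 := hn3b
  rw [hnum3 b, ← hs] at hN3
  have key1 : (-c1) * ((-a / b ^ 2 * (num1 b / num1 a) + a / b * ((-Q + c1 * (Dp / (2 * s))) / num1 a)) / (a / b * (num1 b / num1 a))) = ((M1:ℝ) - N) ^ 2 / (b * s) := by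
    have hB := hn1b.ne'
    have hA := hn1a.ne'
    have hc : c1 ^ 2 = ((M1:ℝ) - N) ^ 2 := sq_abs _
    have hs2'' : s ^ 2 = ((M1:ℝ) - N) ^ 2 - 2 * Q * b + ((M2:ℝ) - N) ^ 2 * b ^ 2 := by
      rw [hs2, hΔ b]
    have step : (-c1) * ((-a / b ^ 2 * (num1 b / num1 a) + a / b * ((-Q + c1 * (Dp / (2 * s))) / num1 a)) / (a / b * (num1 b / num1 a))) = -c1 * ((-Q * b * s + c1 * b * (Dp / 2)) - s * num1 b) / (b * s * num1 b) := by
      field_simp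
      ring
    rw [step, div_eq_div_iff (mul_ne_zero (mul_ne_zero hb0 hsne) hB) (mul_ne_zero hb0 hsne), hnum1 b, ← hs, hDp]
    linear_combination (-(b * s) * (((M2:ℝ) - N) ^ 2 * b ^ 2 - Q * b - s ^ 2)) * hc + (b * s * ((M1:ℝ) - N) ^ 2) * hs2''
  have key2 : (-c2) * ((-(((M2:ℝ) - N) ^ 2) + c2 * (Dp / (2 * s))) / num2 a / (num2 b / num2 a)) = ((M2:ℝ) - N) ^ 2 / s := by
    have hB := hn2b.ne'
    have hA := hn2a.ne'
    have hc : c2 ^ 2 = ((M2:ℝ) - N) ^ 2 := sq_abs _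
    have step : (-c2) * ((-(((M2:ℝ) - N) ^ 2) + c2 * (Dp / (2 * s))) / num2 a / (num2 b / num2 a)) = -c2 * (-(((M2:ℝ) - N) ^ 2) * s + c2 * (Dp / 2)) / (s * num2 b) := by
      field_simp
    rw [step, div_eq_div_iff (mul_ne_zero hsne hB) hsne, hnum2 b, ← hs, hDp]
    linear_combination (-s * (((M2:ℝ) - N) ^ 2 * b - Q)) * hc
  have key3 : ((M1:ℝ) + M2) * ((-Q2 + ((M1:ℝ) + M2) * (Dp / (2 * s))) / num3 a / (num3 b / num3 a)) = ((M1:ℝ) + M2) * (s - ((M1:ℝ) + M2)) / ((b + 1) * s) := by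
    have hB := hn3b.ne'
    have hA := hn3a.ne'
    have step : ((M1:ℝ) + M2) * ((-Q2 + ((M1:ℝ) + M2) * (Dp / (2 * s))) / num3 a / (num3 b / num3 a)) = ((M1:ℝ) + M2) * (-Q2 * s + ((M1:ℝ) + M2) * (Dp / 2)) / (s * num3 b) := by
      field_simp
    rw [step, div_eq_div_iff (mul_ne_zero hsne hB) (mul_ne_zero hbp1 hsne), hnum3 b, ← hs, hDp, hQ, hQ1, hQ2]
    linear_combination (-(((M1:ℝ) + M2) ^ 2) * s) * hs2'
  refine hI.congr_deriv ?_
  rw [key1, key2, key3, hG b, ← hs]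
  have hs2' : s ^ 2 = ((M1:ℝ) - N) ^ 2 - 2 * ((N:ℝ) * M1 + N * M2 + M1 * M2 - (N:ℝ) ^ 2) * b + ((M2:ℝ) - N) ^ 2 * b ^ 2 := by
    rw [hs2, hΔ b, hQ]
  have hM1' := hM1R.ne'
  rw [show (((M1:ℝ) - N) / (2 * M1)) * (1 / b) + (1 / (2 * M1)) * (((M1:ℝ) - N) ^ 2 / (b * s) + ((M2:ℝ) - N) ^ 2 / s + ((M1:ℝ) + M2) * (s - ((M1:ℝ) + M2)) / ((b + 1) * s)) = (((M1:ℝ) - N) * s * (b + 1) + (b + 1) * ((M1:ℝ) - N) ^ 2 + b * (b + 1) * ((M2:ℝ) - N) ^ 2 + b * ((M1:ℝ) + M2) * (s - ((M1:ℝ) + M2))) / (2 * M1 * b * (b + 1) * s) from by field_simp; ring]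
  rw [div_eq_div_iff (by positivity) (by positivity)]
  linear_combination (-2 * (M1:ℝ) * b * (b + 1)) * hs2'
end

section
/- Consider the scalar system for Rayleigh fading with M2 ≥ N: e11 = M1/(z − e12), e12 = −N/(e22 + e11), e22 = −M2/(1 + e12), for real z < 0. Then e11/M1 = G_L(z) where G_L(z) = [M1−N+2M1 z+M2 z−N z+√((M1−N)^2−2Qz+(M2−N)^2 z^2)]/(2M1 z(z+1)); i.e., solving the system and taking the branch with Im-compatible sign yields the closed form. -/
set_option maxHeartbeats 800000


/-- For real `z < 0`, `z ≠ −1`, any solution `(e11, e12, e22)` of the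
Rayleigh-fading fixed-point system `e11 = M1/(z−e12)`, `e12 = −N/(e22+e11)`,
`e22 = −M2/(1+e12)` whose branch satisfies the Cauchy-transform constraint
`e11/M1 ∈ (1/z, 0)` obeys the closed form
`e11/M1 = [M1−N+2M1 z+M2 z−N z+√((M1−N)²−2Qz+(M2−N)² z²)]/(2M1 z(z+1))`. -/
theorem stmt18 {M1 M2 N : ℕ} (hM1 : 0 < M1) (hle : M1 ≤ M2) (hNM2 : N ≤ M2)
    (h3 : N < M1 + M2)
    (z : ℝ) (hz : z < 0) (hz1 : z ≠ -1)
    (Q : ℝ) (hQ : Q = N * M1 + N * M2 + M1 * M2 - (N : ℝ) ^ 2)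
    (hΔpos : 0 < ((M1 : ℝ) - N) ^ 2 - 2 * Q * z + ((M2 : ℝ) - N) ^ 2 * z ^ 2)
    (e11 e12 e22 : ℝ)
    (he11 : e11 = (M1 : ℝ) / (z - e12))
    (he12 : e12 = -(N : ℝ) / (e22 + e11))
    (he22 : e22 = -(M2 : ℝ) / (1 + e12))
    (hbranch : 1 / z < e11 / M1 ∧ e11 / M1 < 0) :
    e11 / M1
      = ((M1 : ℝ) - N + 2 * M1 * z + M2 * z - N * z
          + Real.sqrt (((M1 : ℝ) - N) ^ 2 - 2 * Q * z + ((M2 : ℝ) - N) ^ 2 * z ^ 2))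
        / (2 * M1 * z * (z + 1)) := by
  subst hQ
  obtain ⟨hb1, hb2⟩ := hbranch
  have hM1R : (0:ℝ) < M1 := by exact_mod_cast hM1
  have hNR : (0:ℝ) ≤ N := Nat.cast_nonneg N
  have hleR : (M1:ℝ) ≤ M2 := by exact_mod_cast hle
  have hNM2R : (N:ℝ) ≤ M2 := by exact_mod_cast hNM2
  have hzne : z ≠ 0 := ne_of_lt hz
  have hz1' : z + 1 ≠ 0 := fun h => hz1 (by linarith)
  -- e11 < 0
  have hu0 : e11 < 0 := by
    have h := mul_neg_of_neg_of_pos hb2 hM1R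
    rwa [div_mul_cancel₀ _ (ne_of_gt hM1R)] at h
  have hune : e11 ≠ 0 := ne_of_lt hu0
  -- z * e11 < M1 and 0 < z * e11
  have ht1 : 0 < z * e11 := mul_pos_of_neg_of_neg hz hu0
  have ht2 : z * e11 < M1 := by
    have hzM1 : z * M1 < 0 := mul_neg_of_neg_of_pos hz hM1R
    have h := mul_lt_mul_of_neg_right hb1 hzM1
    have e1 : 1 / z * (z * M1) = (M1:ℝ) := by field_simp
    have e2 : e11 / M1 * (z * M1) = z * e11 := by field_simp
    rw [e1, e2] at h
    exact h
  -- denominators nonzero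
  have hd1 : z - e12 ≠ 0 := by
    intro h
    rw [h, div_zero] at he11
    exact ne_of_lt hu0 he11
  have hd2 : e22 + e11 ≠ 0 := by
    intro h
    rw [h, div_zero] at he12
    rw [he12, sub_zero] at he11
    have : e11 / M1 = 1 / z := by rw [he11]; field_simp
    rw [this] at hb1
    exact lt_irrefl _ hb1
  have hd3 : (1:ℝ) + e12 ≠ 0 := by
    intro h
    rw [h, div_zero] at he22
    have h12 : e12 = -1 := by linarith
    rw [he22, zero_add] at he12
    have hEN : e11 = (N:ℝ) := by
      rw [h12] at he12
      field_simp at he12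
      linarith
    linarith
  -- cleared equations
  have eq1 : e11 * (z - e12) = M1 := by rw [he11]; exact div_mul_cancel₀ _ hd1
  have eq2 : e12 * (e22 + e11) = -(N:ℝ) := by rw [he12]; exact div_mul_cancel₀ _ hd2
  have eq3 : e22 * (1 + e12) = -(M2:ℝ) := by rw [he22]; exact div_mul_cancel₀ _ hd3
  -- quadratic equation for e11
  have hq : z * (z + 1) * e11 ^ 2
      - ((M1:ℝ) - N + 2 * M1 * z + M2 * z - N * z) * e11
      + M1 * ((M1:ℝ) + M2 - N) = 0 := by
    linear_combination (e11 + z * e11 + e11 * e12 - (M1:ℝ) + N - M2) * eq1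
      + (e11 * (1 + e12)) * eq2 + (-(e11 * e12)) * eq3
  -- the square identity
  have hsq : (2 * z * (z + 1) * e11 - ((M1:ℝ) - N + 2 * M1 * z + M2 * z - N * z)) ^ 2
      = ((M1 : ℝ) - N) ^ 2 - 2 * ((N:ℝ) * M1 + N * M2 + M1 * M2 - (N : ℝ) ^ 2) * z
        + ((M2 : ℝ) - N) ^ 2 * z ^ 2 := by
    linear_combination (4 * z * (z + 1)) * hq
  -- positivity of the branch quantity
  have hc : (0:ℝ) < M1 * ((M1:ℝ) + M2 - N) := by
    have : (N:ℝ) < M1 + M2 := by exact_mod_cast h3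
    nlinarith
  have hlt : z * (z + 1) * e11 ^ 2 < M1 * ((M1:ℝ) + M2 - N) := by
    have key : z * (z + 1) * e11 ^ 2 = (z * e11) ^ 2 + (z * e11) * e11 := by ring
    have h4 : (z * e11) ^ 2 < (M1:ℝ) ^ 2 := by nlinarith
    have h5 : (z * e11) * e11 < 0 := mul_neg_of_pos_of_neg ht1 hu0
    have h6 : (M1:ℝ) ^ 2 ≤ M1 * ((M1:ℝ) + M2 - N) := by nlinarith
    linarith
  have hmul : (2 * z * (z + 1) * e11 - ((M1:ℝ) - N + 2 * M1 * z + M2 * z - N * z)) * e11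
      = z * (z + 1) * e11 ^ 2 - M1 * ((M1:ℝ) + M2 - N) := by
    linear_combination hq
  have hs : 0 < 2 * z * (z + 1) * e11 - ((M1:ℝ) - N + 2 * M1 * z + M2 * z - N * z) := by
    by_contra hcon
    push_neg at hcon
    have h7 := mul_nonneg (neg_nonneg.2 hcon) (neg_nonneg.2 hu0.le)
    rw [neg_mul_neg, hmul] at h7
    linarith
  have hS : Real.sqrt (((M1 : ℝ) - N) ^ 2
        - 2 * ((N:ℝ) * M1 + N * M2 + M1 * M2 - (N : ℝ) ^ 2) * z
        + ((M2 : ℝ) - N) ^ 2 * z ^ 2)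
      = 2 * z * (z + 1) * e11 - ((M1:ℝ) - N + 2 * M1 * z + M2 * z - N * z) := by
    rw [← hsq]
    exact Real.sqrt_sq hs.le
  rw [hS]
  field_simp
  ring
end
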